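/- The Brier loss function is 2-mixable: the set {(u,v) ∈ [0,1]² : ∃p ∈ [0,1], u ≤ e^{−2p²} and v ≤ e^{−2(1−p)²}} is convex. -/

import Mathlib

open Set

namespace BrierAux

variable {p : ℝ}

/-- The mgf-type function in Hoeffding's lemma for a Bernoulli variable. -/
noncomputable def h (p s : ℝ) : ℝ :=
  (1 - p) * Real.exp (-(4 * p) * s) + p * Real.exp (4 * (1 - p) * s)

noncomputable def h1 (p s : ℝ) : ℝ :=
  (1 - p) * (-(4 * p) * Real.exp (-(4 * p) * s)) + p * (4 * (1 - p) * Real.exp (4 * (1 - p) * s))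

noncomputable def h2 (p s : ℝ) : ℝ :=
  (1 - p) * (-(4 * p) * (-(4 * p) * Real.exp (-(4 * p) * s))) +
    p * (4 * (1 - p) * (4 * (1 - p) * Real.exp (4 * (1 - p) * s)))

lemma h_pos (hp0 : 0 ≤ p) (hp1 : p ≤ 1) (s : ℝ) : 0 < h p s := by
  rcases hp1.lt_or_eq with h1 | h1
  · have : 0 < (1 - p) * Real.exp (-(4 * p) * s) := by
      have : 0 < 1 - p := by linarith
      positivity
    have h2 : 0 ≤ p * Real.exp (4 * (1 - p) * s) := by positivity
    unfold h; linarith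
  · subst h1; simp [h]

lemma hasDerivAt_h (s : ℝ) : HasDerivAt (h p) (h1 p s) s := by
  have d1 : HasDerivAt (fun s : ℝ => Real.exp (-(4 * p) * s))
      (-(4 * p) * Real.exp (-(4 * p) * s)) s := by
    simpa [mul_comm] using ((hasDerivAt_id s).const_mul (-(4 * p))).exp
  have d2 : HasDerivAt (fun s : ℝ => Real.exp (4 * (1 - p) * s))
      (4 * (1 - p) * Real.exp (4 * (1 - p) * s)) s := by
    simpa [mul_comm] using ((hasDerivAt_id s).const_mul (4 * (1 - p))).exp
  exact (d1.const_mul (1 - p)).add (d2.const_mul p)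

lemma hasDerivAt_h1 (s : ℝ) : HasDerivAt (h1 p) (h2 p s) s := by
  have d1 : HasDerivAt (fun s : ℝ => Real.exp (-(4 * p) * s))
      (-(4 * p) * Real.exp (-(4 * p) * s)) s := by
    simpa [mul_comm] using ((hasDerivAt_id s).const_mul (-(4 * p))).exp
  have d2 : HasDerivAt (fun s : ℝ => Real.exp (4 * (1 - p) * s))
      (4 * (1 - p) * Real.exp (4 * (1 - p) * s)) s := by
    simpa [mul_comm] using ((hasDerivAt_id s).const_mul (4 * (1 - p))).exp
  exact ((d1.const_mul (-(4 * p))).const_mul (1 - p)).add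
    ((d2.const_mul (4 * (1 - p))).const_mul p)

noncomputable def G (p s : ℝ) : ℝ := 2 * s ^ 2 - Real.log (h p s)

noncomputable def G1 (p s : ℝ) : ℝ := 4 * s - h1 p s / h p s

lemma hasDerivAt_G (hp0 : 0 ≤ p) (hp1 : p ≤ 1) (s : ℝ) : HasDerivAt (G p) (G1 p s) s := by
  have d1 : HasDerivAt (fun s : ℝ => 2 * s ^ 2) (4 * s) s := by
    have := (hasDerivAt_pow 2 s).const_mul (2:ℝ)
    refine this.congr_deriv ?_
    push_cast
    ring
  have d2 : HasDerivAt (fun s => Real.log (h p s)) (h1 p s / h p s) s :=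
    (hasDerivAt_h s).log (h_pos hp0 hp1 s).ne'
  exact d1.sub d2

lemma hasDerivAt_G1 (hp0 : 0 ≤ p) (hp1 : p ≤ 1) (s : ℝ) :
    HasDerivAt (G1 p) (4 - (h2 p s * h p s - h1 p s * h1 p s) / (h p s) ^ 2) s := by
  have d1 : HasDerivAt (fun s : ℝ => 4 * s) 4 s := by
    simpa using (hasDerivAt_id s).const_mul (4:ℝ)
  exact d1.sub ((hasDerivAt_h1 s).div (hasDerivAt_h s) (h_pos hp0 hp1 s).ne')

lemma G2_nonneg (hp0 : 0 ≤ p) (hp1 : p ≤ 1) (s : ℝ) :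
    0 ≤ 4 - (h2 p s * h p s - h1 p s * h1 p s) / (h p s) ^ 2 := by
  have hpos := h_pos hp0 hp1 s
  rw [sub_nonneg, div_le_iff₀ (by positivity)]
  set x := Real.exp (-(4 * p) * s)
  set y := Real.exp (4 * (1 - p) * s)
  have hx : 0 < x := Real.exp_pos _
  have hy : 0 < y := Real.exp_pos _
  unfold h h1 h2
  nlinarith [sq_nonneg ((1 - p) * x - p * y), mul_pos hx hy, sq_nonneg (x - y)]

lemma G1_monotone (hp0 : 0 ≤ p) (hp1 : p ≤ 1) : Monotone (G1 p) :=
  monotone_of_hasDerivAt_nonneg (hasDerivAt_G1 hp0 hp1) (fun s => G2_nonneg hp0 hp1 s)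

lemma G1_zero : G1 p 0 = 0 := by
  simp [G1, h1, h]
  ring

lemma G_nonneg (hp0 : 0 ≤ p) (hp1 : p ≤ 1) (d : ℝ) : 0 ≤ G p d := by
  have hG0 : G p 0 = 0 := by simp [G, h]
  rcases le_or_gt 0 d with hd | hd
  · have mono : MonotoneOn (G p) (Set.Ici 0) := by
      apply monotoneOn_of_hasDerivWithinAt_nonneg (convex_Ici 0)
        (fun s _ => (hasDerivAt_G hp0 hp1 s).continuousAt.continuousWithinAt)
        (fun s _ => (hasDerivAt_G hp0 hp1 s).hasDerivWithinAt)
      intro s hs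
      rw [interior_Ici] at hs
      have := G1_monotone hp0 hp1 (le_of_lt hs)
      rw [G1_zero] at this
      exact this
    have := mono (Set.self_mem_Ici) hd hd
    rwa [hG0] at this
  · have anti : AntitoneOn (G p) (Set.Iic 0) := by
      apply antitoneOn_of_hasDerivWithinAt_nonpos (convex_Iic 0)
        (fun s _ => (hasDerivAt_G hp0 hp1 s).continuousAt.continuousWithinAt)
        (fun s _ => (hasDerivAt_G hp0 hp1 s).hasDerivWithinAt)
      intro s hs
      rw [interior_Iic] at hs
      have := G1_monotone hp0 hp1 (le_of_lt hs)
      rw [G1_zero] at this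
      exact this
    have := anti hd.le (Set.self_mem_Iic) hd.le
    rwa [hG0] at this

/-- Hoeffding's lemma for a Bernoulli random variable, with λ = 4d. -/
lemma bern_hoeffding (hp0 : 0 ≤ p) (hp1 : p ≤ 1) (d : ℝ) :
    (1 - p) * Real.exp (-(4 * p) * d) + p * Real.exp (4 * (1 - p) * d) ≤
      Real.exp (2 * d ^ 2) := by
  have h0 := G_nonneg hp0 hp1 d
  unfold G at h0
  have hlog : Real.log (h p d) ≤ 2 * d ^ 2 := by linarith
  have := Real.exp_le_exp.mpr hlog
  rwa [Real.exp_log (h_pos hp0 hp1 d)] at this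

/-- The tangent-line (supporting hyperplane) inequality. -/
lemma tangent (hp0 : 0 ≤ p) (hp1 : p ≤ 1) {q : ℝ} (hq0 : 0 ≤ q) (hq1 : q ≤ 1) :
    (1 - p) * Real.exp (-(2 * (1 - p) ^ 2)) * Real.exp (-(2 * q ^ 2)) +
      p * Real.exp (-(2 * p ^ 2)) * Real.exp (-(2 * (1 - q) ^ 2)) ≤
      Real.exp (-(2 * p ^ 2) - 2 * (1 - p) ^ 2) := by
  have H := bern_hoeffding hp0 hp1 (q - p)
  have c : (0:ℝ) < Real.exp (-(2 * (q - p) ^ 2) - 2 * p ^ 2 - 2 * (1 - p) ^ 2) :=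
    Real.exp_pos _
  have key := mul_le_mul_of_nonneg_right H c.le
  calc (1 - p) * Real.exp (-(2 * (1 - p) ^ 2)) * Real.exp (-(2 * q ^ 2)) +
      p * Real.exp (-(2 * p ^ 2)) * Real.exp (-(2 * (1 - q) ^ 2))
      = ((1 - p) * Real.exp (-(4 * p) * (q - p)) + p * Real.exp (4 * (1 - p) * (q - p))) *
        Real.exp (-(2 * (q - p) ^ 2) - 2 * p ^ 2 - 2 * (1 - p) ^ 2) := by
        rw [add_mul]
        congr 1
        · rw [mul_assoc, mul_assoc, ← Real.exp_add, ← Real.exp_add]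
          congr 2
          ring
        · rw [mul_assoc, mul_assoc, ← Real.exp_add, ← Real.exp_add]
          congr 2
          ring
    _ ≤ Real.exp (2 * (q - p) ^ 2) *
        Real.exp (-(2 * (q - p) ^ 2) - 2 * p ^ 2 - 2 * (1 - p) ^ 2) := key
    _ = Real.exp (-(2 * p ^ 2) - 2 * (1 - p) ^ 2) := by
        rw [← Real.exp_add]; congr 1; ring

end BrierAux

open BrierAux in
/-- Membership from all supporting half-planes. -/
lemma mem_of_planes (x : ℝ × ℝ) (hx1 : x.1 ∈ Icc (0:ℝ) 1) (hx2 : x.2 ∈ Icc (0:ℝ) 1)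
    (h : ∀ p ∈ Icc (0:ℝ) 1,
      (1 - p) * Real.exp (-(2 * (1 - p) ^ 2)) * x.1 + p * Real.exp (-(2 * p ^ 2)) * x.2 ≤
        Real.exp (-(2 * p ^ 2) - 2 * (1 - p) ^ 2)) :
    ∃ p ∈ Icc (0:ℝ) 1,
      x.1 ≤ Real.exp (-(2 * p ^ 2)) ∧ x.2 ≤ Real.exp (-(2 * (1 - p) ^ 2)) := by
  obtain ⟨hx10, hx11⟩ := hx1
  obtain ⟨hx20, hx21⟩ := hx2
  by_cases hA : x.1 ≤ Real.exp (-2)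
  · exact ⟨1, ⟨zero_le_one, le_refl 1⟩, by norm_num [hA], by norm_num [hx21]⟩
  by_cases hB : x.2 ≤ Real.exp (-2)
  · exact ⟨0, ⟨le_refl 0, zero_le_one⟩, by norm_num [hx11], by norm_num [hB]⟩
  push_neg at hA hB
  have hx1pos : 0 < x.1 := lt_trans (Real.exp_pos _) hA
  have hx2pos : 0 < x.2 := lt_trans (Real.exp_pos _) hB
  by_cases hC : x.1 < 1
  · -- choose p from x.1
    have hL1 : Real.log x.1 < 0 := Real.log_neg hx1pos hC
    have hL2 : -2 < Real.log x.1 := by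
      have := Real.log_lt_log (Real.exp_pos _) hA
      rwa [Real.log_exp] at this
    set t : ℝ := -Real.log x.1 / 2 with ht
    have ht0 : 0 < t := by rw [ht]; linarith
    have ht1 : t < 1 := by rw [ht]; linarith
    set q : ℝ := Real.sqrt t with hq
    have hq0 : 0 < q := Real.sqrt_pos.mpr ht0
    have hq1 : q ≤ 1 := by
      rw [hq]
      calc Real.sqrt t ≤ Real.sqrt 1 := Real.sqrt_le_sqrt ht1.le
        _ = 1 := Real.sqrt_one
    have hqsq : q ^ 2 = t := Real.sq_sqrt ht0.le
    have hx1eq : x.1 = Real.exp (-(2 * q ^ 2)) := by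
      rw [hqsq, ht]
      rw [show -(2 * (-Real.log x.1 / 2)) = Real.log x.1 by ring, Real.exp_log hx1pos]
    refine ⟨q, ⟨hq0.le, hq1⟩, le_of_eq hx1eq, ?_⟩
    have hplane := h q ⟨hq0.le, hq1⟩
    rw [Real.exp_sub, div_eq_mul_inv, ← Real.exp_neg, hx1eq] at hplane
    have key : q * Real.exp (-(2 * q ^ 2)) * x.2 ≤
        q * Real.exp (-(2 * q ^ 2)) * Real.exp (-(2 * (1 - q) ^ 2)) := by
      linarith [hplane]
    have hpos : 0 < q * Real.exp (-(2 * q ^ 2)) := by positivity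
    exact le_of_mul_le_mul_left key hpos
  · push_neg at hC
    have hx1one : x.1 = 1 := le_antisymm hx11 hC
    by_cases hD : x.2 < 1
    · -- choose p from x.2
      have hL1 : Real.log x.2 < 0 := Real.log_neg hx2pos hD
      have hL2 : -2 < Real.log x.2 := by
        have := Real.log_lt_log (Real.exp_pos _) hB
        rwa [Real.log_exp] at this
      set t : ℝ := -Real.log x.2 / 2 with ht
      have ht0 : 0 < t := by rw [ht]; linarith
      have ht1 : t < 1 := by rw [ht]; linarith
      set r : ℝ := Real.sqrt t with hr
      have hr0 : 0 < r := Real.sqrt_pos.mpr ht0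
      have hr1 : r ≤ 1 := by
        rw [hr]
        calc Real.sqrt t ≤ Real.sqrt 1 := Real.sqrt_le_sqrt ht1.le
          _ = 1 := Real.sqrt_one
      have hrsq : r ^ 2 = t := Real.sq_sqrt ht0.le
      set q : ℝ := 1 - r with hqdef
      have hq0 : 0 ≤ q := by rw [hqdef]; linarith
      have hq1 : q < 1 := by rw [hqdef]; linarith
      have hx2eq : x.2 = Real.exp (-(2 * (1 - q) ^ 2)) := by
        rw [hqdef, show (1:ℝ) - (1 - r) = r by ring, hrsq, ht]
        rw [show -(2 * (-Real.log x.2 / 2)) = Real.log x.2 by ring, Real.exp_log hx2pos]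
      refine ⟨q, ⟨hq0, hq1.le⟩, ?_, le_of_eq hx2eq⟩
      have hplane := h q ⟨hq0, hq1.le⟩
      rw [Real.exp_sub, div_eq_mul_inv, ← Real.exp_neg, hx2eq] at hplane
      have key : (1 - q) * Real.exp (-(2 * (1 - q) ^ 2)) * x.1 ≤
          (1 - q) * Real.exp (-(2 * (1 - q) ^ 2)) * Real.exp (-(2 * q ^ 2)) := by
        linarith [hplane]
      have hpos : 0 < (1 - q) * Real.exp (-(2 * (1 - q) ^ 2)) := by
        have : 0 < 1 - q := by linarith
        positivity
      exact le_of_mul_le_mul_left key hpos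
    · push_neg at hD
      have hx2one : x.2 = 1 := le_antisymm hx21 hD
      exfalso
      have hplane := h (1/2) (by norm_num)
      rw [hx1one, hx2one] at hplane
      have e1 : -(2 * (1/2:ℝ)^2) = -(1/2) := by norm_num
      have e2 : -(2 * (1 - 1/2:ℝ)^2) = -(1/2) := by norm_num
      rw [e1, e2] at hplane
      have e3 : (-(1/2):ℝ) - 2 * (1 - 1/2:ℝ)^2 = -1 := by norm_num
      rw [e3] at hplane
      have h12 : Real.exp (-(1/2):ℝ) ≤ Real.exp (-1:ℝ) := by linarith [hplane]
      rw [Real.exp_le_exp] at h12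
      norm_num at h12

open BrierAux

/-- The Brier loss function `λ₀(p) = p²`, `λ₁(p) = (1-p)²` is 2-mixable: the set
`{(u,v) ∈ [0,1]² : ∃ p ∈ [0,1], u ≤ e^{-2p²} and v ≤ e^{-2(1-p)²}}` is convex. -/
theorem brier_loss_two_mixable :
    Convex ℝ {x : ℝ × ℝ | x.1 ∈ Icc (0:ℝ) 1 ∧ x.2 ∈ Icc (0:ℝ) 1 ∧
      ∃ p ∈ Icc (0:ℝ) 1,
        x.1 ≤ Real.exp (-(2 * p ^ 2)) ∧ x.2 ≤ Real.exp (-(2 * (1 - p) ^ 2))} := by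
  intro x hx y hy a b ha hb hab
  obtain ⟨⟨hx10, hx11⟩, ⟨hx20, hx21⟩, q1, ⟨hq10, hq11⟩, hxq1, hxq2⟩ := hx
  obtain ⟨⟨hy10, hy11⟩, ⟨hy20, hy21⟩, q2, ⟨hq20, hq21⟩, hyq1, hyq2⟩ := hy
  have hz1 : (a • x + b • y).1 = a * x.1 + b * y.1 := rfl
  have hz2 : (a • x + b • y).2 = a * x.2 + b * y.2 := rfl
  refine ⟨?_, ?_, ?_⟩
  · rw [hz1]; constructor
    · positivity
    · nlinarith
  · rw [hz2]; constructor
    · positivity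
    · nlinarith
  · apply mem_of_planes
    · rw [hz1]; constructor
      · positivity
      · nlinarith
    · rw [hz2]; constructor
      · positivity
      · nlinarith
    intro p ⟨hp0, hp1⟩
    rw [hz1, hz2]
    have tx : (1 - p) * Real.exp (-(2 * (1 - p) ^ 2)) * x.1 +
        p * Real.exp (-(2 * p ^ 2)) * x.2 ≤
        Real.exp (-(2 * p ^ 2) - 2 * (1 - p) ^ 2) := by
      calc (1 - p) * Real.exp (-(2 * (1 - p) ^ 2)) * x.1 + p * Real.exp (-(2 * p ^ 2)) * x.2
          ≤ (1 - p) * Real.exp (-(2 * (1 - p) ^ 2)) * Real.exp (-(2 * q1 ^ 2)) +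
            p * Real.exp (-(2 * p ^ 2)) * Real.exp (-(2 * (1 - q1) ^ 2)) := by
            have c1 : (0:ℝ) ≤ (1 - p) * Real.exp (-(2 * (1 - p) ^ 2)) := by
              have : (0:ℝ) ≤ 1 - p := by linarith
              positivity
            have c2 : (0:ℝ) ≤ p * Real.exp (-(2 * p ^ 2)) := by positivity
            gcongr
        _ ≤ _ := tangent hp0 hp1 hq10 hq11
    have ty : (1 - p) * Real.exp (-(2 * (1 - p) ^ 2)) * y.1 +
        p * Real.exp (-(2 * p ^ 2)) * y.2 ≤
        Real.exp (-(2 * p ^ 2) - 2 * (1 - p) ^ 2) := by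
      calc (1 - p) * Real.exp (-(2 * (1 - p) ^ 2)) * y.1 + p * Real.exp (-(2 * p ^ 2)) * y.2
          ≤ (1 - p) * Real.exp (-(2 * (1 - p) ^ 2)) * Real.exp (-(2 * q2 ^ 2)) +
            p * Real.exp (-(2 * p ^ 2)) * Real.exp (-(2 * (1 - q2) ^ 2)) := by
            have c1 : (0:ℝ) ≤ (1 - p) * Real.exp (-(2 * (1 - p) ^ 2)) := by
              have : (0:ℝ) ≤ 1 - p := by linarith
              positivity
            have c2 : (0:ℝ) ≤ p * Real.exp (-(2 * p ^ 2)) := by positivity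
            gcongr
        _ ≤ _ := tangent hp0 hp1 hq20 hq21
    have hsum : a * Real.exp (-(2 * p ^ 2) - 2 * (1 - p) ^ 2) +
        b * Real.exp (-(2 * p ^ 2) - 2 * (1 - p) ^ 2) =
        Real.exp (-(2 * p ^ 2) - 2 * (1 - p) ^ 2) := by
      rw [← add_mul, hab, one_mul]
    linarith [mul_le_mul_of_nonneg_left tx ha, mul_le_mul_of_nonneg_left ty hb, hsum]
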